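/- arXiv:1508.03282 — 5 statements merged into one kernel-verified Lean document; each statement's English description precedes it below -/
import Mathlib

section
/- Let q be a density family for L. Then for every t ≥ 0 and every (B_E ⊗ F_t)-measurable function f : E × Ω → [0,∞], one has E[ω ↦ f(L(ω), ω)] = ∫_E E[f(x, ·) q^x_t] λ(dx), both sides possibly being +∞. -/
open MeasureTheory Set
open scoped ENNReal NNReal

/-- Key disintegration formula: for every `t` and every
`(B_E ⊗ F_t)`-measurable nonnegative `f`, `E[f(L,·)] = ∫_E E[f(x,·) q^x_t] λ(dx)`. -/
theorem density_family_expectation_formula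
    {Ω : Type*} {mΩ : MeasurableSpace Ω} {P : Measure Ω} [IsProbabilityMeasure P]
    {E : Type*} [MeasurableSpace E] [StandardBorelSpace E]
    (F : Filtration ℝ≥0 mΩ)
    (hF_rc : ∀ t : ℝ≥0, F t = ⨅ (ε : ℝ≥0) (_ : 0 < ε), F (t + ε))
    (L : Ω → E) (hL : Measurable L)
    (lam : Measure E) (hlam : P.map L = lam)
    (ν : ℝ≥0 → Ω → Measure E)
    (hν_prob : ∀ (t : ℝ≥0) (ω : Ω), IsProbabilityMeasure (ν t ω))
    (hν_meas : ∀ (t : ℝ≥0) (B : Set E), MeasurableSet B →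
      Measurable[F t] fun ω => ν t ω B)
    (hν_cond : ∀ (t : ℝ≥0) (B : Set E), MeasurableSet B →
      ∀ A : Set Ω, MeasurableSet[F t] A →
        ∫⁻ ω in A, ν t ω B ∂P = P (A ∩ L ⁻¹' B))
    (q : E → Ω → ℝ≥0 → ℝ)
    (hq_meas : Measurable fun p : E × Ω × ℝ≥0 => q p.1 p.2.1 p.2.2)
    (hq_nonneg : ∀ x ω t, 0 ≤ q x ω t)
    (hq_rc : ∀ (x : E) (ω : Ω) (t : ℝ≥0),
      ContinuousWithinAt (fun s => q x ω s) (Set.Ici t) t)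
    (hq_mart : ∀ x : E, Martingale (fun t ω => q x ω t) F P)
    (hq_dens : ∀ t : ℝ≥0, ∀ᵐ ω ∂P, ∀ B : Set E, MeasurableSet B →
      ν t ω B = ∫⁻ x in B, ENNReal.ofReal (q x ω t) ∂lam)
    (t : ℝ≥0) (f : E → Ω → ℝ≥0∞)
    (hf : Measurable[(inferInstance : MeasurableSpace E).prod (F t)]
      fun p : E × Ω => f p.1 p.2) :
    ∫⁻ ω, f (L ω) ω ∂P = ∫⁻ x, ∫⁻ ω, f x ω * ENNReal.ofReal (q x ω t) ∂P ∂lam := by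
  classical
  have hlamP : IsProbabilityMeasure lam := hlam ▸ Measure.isProbabilityMeasure_map hL.aemeasurable
  have hle : (inferInstance : MeasurableSpace E).prod (F t)
      ≤ (inferInstance : MeasurableSpace (E × Ω)) :=
    sup_le_sup (le_refl ((inferInstance : MeasurableSpace E).comap Prod.fst))
      (MeasurableSpace.comap_mono (F.le t))
  -- measurability of the density
  have hq1 : Measurable fun p : E × Ω => q p.1 p.2 t :=
    hq_meas.comp (measurable_fst.prodMk (measurable_snd.prodMk measurable_const))
  have hq2 : Measurable fun p : E × Ω => ENNReal.ofReal (q p.1 p.2 t) := hq1.ennreal_ofReal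
  have hq2' : ∀ x : E, Measurable fun ω => ENNReal.ofReal (q x ω t) :=
    fun x => hq2.comp measurable_prodMk_left
  -- the kernel
  set κ : ProbabilityTheory.Kernel E Ω :=
    ProbabilityTheory.Kernel.withDensity (ProbabilityTheory.Kernel.const E P)
      (fun x ω => ENNReal.ofReal (q x ω t)) with hκ
  have hq2u : Measurable (Function.uncurry fun (x : E) (ω : Ω) => ENNReal.ofReal (q x ω t)) :=
    hq2
  have hκ_apply : ∀ x, κ x = P.withDensity fun ω => ENNReal.ofReal (q x ω t) := by
    intro x
    rw [hκ, ProbabilityTheory.Kernel.withDensity_apply _ hq2u,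
      ProbabilityTheory.Kernel.const_apply]
  haveI : ProbabilityTheory.IsSFiniteKernel κ :=
    ProbabilityTheory.Kernel.IsSFiniteKernel.withDensity _ (fun _ _ => ENNReal.ofReal_ne_top)
  -- the two measures
  set μ₁ : Measure (E × Ω) := P.map (fun ω => (L ω, ω)) with hμ₁
  have hmap : Measurable fun ω => (L ω, ω) := hL.prodMk measurable_id
  set μ₂ : Measure (E × Ω) := lam.compProd κ with hμ₂
  -- rectangle computation
  have key : ∀ B : Set E, MeasurableSet B → ∀ A : Set Ω, MeasurableSet[F t] A →
      P (L ⁻¹' B ∩ A) = ∫⁻ x in B, ∫⁻ ω in A, ENNReal.ofReal (q x ω t) ∂P ∂lam := by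
    intro B hB A hA
    rw [Set.inter_comm, ← hν_cond t B hB A hA]
    have h1 : ∫⁻ ω in A, ν t ω B ∂P
        = ∫⁻ ω in A, ∫⁻ x in B, ENNReal.ofReal (q x ω t) ∂lam ∂P := by
      refine lintegral_congr_ae (ae_restrict_of_ae ?_)
      filter_upwards [hq_dens t] with ω hω using hω B hB
    rw [h1]
    exact lintegral_lintegral_swap
      ((hq2.comp measurable_swap).aemeasurable)
  -- equality of trimmed measures
  have hμ₁_rect : ∀ B : Set E, MeasurableSet B → ∀ A : Set Ω, MeasurableSet[F t] A →
      μ₁ (B ×ˢ A) = P (L ⁻¹' B ∩ A) := by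
    intro B hB A hA
    rw [hμ₁, Measure.map_apply hmap (hB.prod ((F.le t) A hA))]
    rfl
  have hμ₂_rect : ∀ B : Set E, MeasurableSet B → ∀ A : Set Ω, MeasurableSet[F t] A →
      μ₂ (B ×ˢ A) = ∫⁻ x in B, ∫⁻ ω in A, ENNReal.ofReal (q x ω t) ∂P ∂lam := by
    intro B hB A hA
    rw [hμ₂, Measure.compProd_apply_prod hB ((F.le t) A hA)]
    refine setLIntegral_congr_fun hB (fun x _ => ?_)
    rw [hκ_apply x, withDensity_apply _ ((F.le t) A hA)]
  have htrim : μ₁.trim hle = μ₂.trim hle := by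
    haveI : IsProbabilityMeasure μ₁ := Measure.isProbabilityMeasure_map hmap.aemeasurable
    haveI : IsFiniteMeasure (μ₁.trim hle) :=
      ⟨by rw [trim_measurableSet_eq hle MeasurableSet.univ]; exact measure_lt_top _ _⟩
    refine @MeasureTheory.ext_of_generate_finite (E × Ω)
      ((inferInstance : MeasurableSpace E).prod (F t)) _ _ _
      (@generateFrom_prod E Ω _ (F t)).symm (@isPiSystem_prod E Ω _ (F t)) _ ?_ ?_
    · rintro s ⟨B, hB, A, hA, rfl⟩
      rw [trim_measurableSet_eq hle, trim_measurableSet_eq hle]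
      · rw [hμ₁_rect B hB A hA, hμ₂_rect B hB A hA, key B hB A hA]
      · exact @MeasurableSet.prod E Ω _ (F t) _ _ hB hA
      · exact @MeasurableSet.prod E Ω _ (F t) _ _ hB hA
    · rw [trim_measurableSet_eq hle MeasurableSet.univ,
        trim_measurableSet_eq hle MeasurableSet.univ]
      have := key Set.univ MeasurableSet.univ Set.univ MeasurableSet.univ
      rw [← Set.univ_prod_univ, hμ₁_rect _ MeasurableSet.univ _ MeasurableSet.univ,
        hμ₂_rect _ MeasurableSet.univ _ MeasurableSet.univ, this]
  -- assemble
  have hf' : Measurable fun p : E × Ω => f p.1 p.2 := hf.mono hle le_rfl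
  calc ∫⁻ ω, f (L ω) ω ∂P
      = ∫⁻ p, f p.1 p.2 ∂μ₁ := (lintegral_map hf' hmap).symm
    _ = ∫⁻ p, f p.1 p.2 ∂(μ₁.trim hle) := (lintegral_trim hle hf).symm
    _ = ∫⁻ p, f p.1 p.2 ∂(μ₂.trim hle) := by rw [htrim]
    _ = ∫⁻ p, f p.1 p.2 ∂μ₂ := lintegral_trim hle hf
    _ = ∫⁻ x, ∫⁻ ω, f x ω ∂(κ x) ∂lam := Measure.lintegral_compProd hf'
    _ = ∫⁻ x, ∫⁻ ω, f x ω * ENNReal.ofReal (q x ω t) ∂P ∂lam := by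
        refine lintegral_congr fun x => ?_
        have hg : Measurable fun ω => f x ω := hf'.comp measurable_prodMk_left
        rw [hκ_apply x, lintegral_withDensity_eq_lintegral_mul P (hq2' x) hg]
        exact lintegral_congr fun ω => mul_comm _ _
end

section
/- Suppose that F is right-continuous and P-complete (each F_t contains all P-null sets of 𝒜) and that Jacod's density hypothesis holds. Then the initially enlarged filtration G⁰ is right-continuous: for every t ≥ 0, F_t ⊔ σ(L) = ⋂_{ε>0} (F_{t+ε} ⊔ σ(L)); equivalently, G⁰_t = G_t for all t ≥ 0. -/
open MeasureTheory Set
open scoped ENNReal NNReal ProbabilityTheory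

namespace JacodAux
variable {α β : Type*}

lemma prod_eq_gen (m₁ : MeasurableSpace α) (m₂ : MeasurableSpace β) :
    m₁.prod m₂ = MeasurableSpace.generateFrom
      (image2 (· ×ˢ ·) {s | MeasurableSet[m₁] s} {t | MeasurableSet[m₂] t}) := by
  letI := m₁; letI := m₂
  exact generateFrom_prod.symm

lemma isPiSystem_boxes (m₁ : MeasurableSpace α) (m₂ : MeasurableSpace β) :
    IsPiSystem (image2 (· ×ˢ ·) {s | MeasurableSet[m₁] s} {t | MeasurableSet[m₂] t}) := by
  letI := m₁; letI := m₂
  exact isPiSystem_prod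

lemma prod_mono_left {m m' : MeasurableSpace α} (mβ : MeasurableSpace β) (h : m ≤ m') :
    m.prod mβ ≤ m'.prod mβ :=
  sup_le_sup_right (MeasurableSpace.comap_mono h) _

lemma measurable_mk_left' {m₁ : MeasurableSpace α} {m₂ : MeasurableSpace β} (x : β) :
    @Measurable α (α × β) m₁ (m₁.prod m₂) (fun a => (a, x)) := by
  letI := m₁; letI := m₂; exact measurable_id.prodMk measurable_const

lemma measurable_snd' {m₁ : MeasurableSpace α} {m₂ : MeasurableSpace β} :
    @Measurable (α × β) β (m₁.prod m₂) m₂ Prod.snd := by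
  letI := m₁; letI := m₂; exact measurable_snd

lemma measurable_fst' {m₁ : MeasurableSpace α} {m₂ : MeasurableSpace β} :
    @Measurable (α × β) α (m₁.prod m₂) m₁ Prod.fst := by
  letI := m₁; letI := m₂; exact measurable_fst

lemma section_meas {m₁ : MeasurableSpace α} {m₂ : MeasurableSpace β} {W : Set (α × β)}
    (hW : MeasurableSet[m₁.prod m₂] W) (x : β) :
    MeasurableSet[m₁] ((fun a => (a, x)) ⁻¹' W) :=
  measurable_mk_left' x hW

lemma sup_comap_eq {m₁ : MeasurableSpace α} (mβ : MeasurableSpace β) (L : α → β) :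
    m₁ ⊔ MeasurableSpace.comap L mβ
      = MeasurableSpace.comap (fun a => (a, L a)) (m₁.prod mβ) := by
  show m₁ ⊔ MeasurableSpace.comap L mβ
      = MeasurableSpace.comap (fun a => (a, L a)) (m₁.comap Prod.fst ⊔ mβ.comap Prod.snd)
  rw [MeasurableSpace.comap_sup, MeasurableSpace.comap_comp, MeasurableSpace.comap_comp]
  have h1 : (Prod.fst ∘ fun a => (a, L a)) = id := rfl
  have h2 : (Prod.snd ∘ fun a => (a, L a)) = L := rfl
  rw [h1, h2, MeasurableSpace.comap_id]

/-- Two probability measures agreeing on boxes `U ×ˢ B` with `U ∈ m`, `B ∈ mβ` agree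
on the sub-σ-algebra `m.prod mβ`. -/
lemma measure_eq_on_subprod {m : MeasurableSpace α} [mα : MeasurableSpace α]
    [mβ : MeasurableSpace β] (hm : m ≤ mα)
    (μ₁ μ₂ : Measure (α × β)) [IsProbabilityMeasure μ₁] [IsProbabilityMeasure μ₂]
    (hrect : ∀ U B, MeasurableSet[m] U → MeasurableSet B → μ₁ (U ×ˢ B) = μ₂ (U ×ˢ B)) :
    ∀ W, MeasurableSet[m.prod mβ] W → μ₁ W = μ₂ W := by
  have hle : m.prod mβ ≤ mα.prod mβ := prod_mono_left mβ hm
  intro W hW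
  refine @MeasurableSpace.induction_on_inter (α × β) (m.prod mβ) (fun W _ => μ₁ W = μ₂ W) _
    (prod_eq_gen m mβ) (isPiSystem_boxes m mβ) (by simp) ?_ ?_ ?_ W hW
  · rintro _ ⟨U, hU, B, hB, rfl⟩
    exact hrect U B hU hB
  · intro s hs ihs
    have hs' : @MeasurableSet (α × β) (@Prod.instMeasurableSpace α β mα mβ) s := hle s hs
    rw [prob_compl_eq_one_sub hs' (μ := μ₁), prob_compl_eq_one_sub hs' (μ := μ₂), ihs]
  · intro f hf hfm ihf
    have hfm' : ∀ i, @MeasurableSet (α × β) (@Prod.instMeasurableSpace α β mα mβ) (f i) :=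
      fun i => hle _ (hfm i)
    rw [measure_iUnion hf hfm' (μ := μ₁), measure_iUnion hf hfm' (μ := μ₂)]
    exact tsum_congr ihf

/-- If an `m`-measurable nonnegative function has set-lintegrals over `m`-sets dominated by
the measure, it is a.e. bounded by `1`. -/
lemma ae_le_one_of_forall_setLIntegral_le {m : MeasurableSpace α} [mα : MeasurableSpace α]
    (hm : m ≤ mα) (P : Measure α) [IsFiniteMeasure P] {g : α → ℝ≥0∞}
    (hg : Measurable[m] g)
    (hbd : ∀ V, MeasurableSet[m] V → ∫⁻ ω in V, g ω ∂P ≤ P V) :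
    ∀ᵐ ω ∂P, g ω ≤ 1 := by
  have hnull : ∀ n : ℕ, P {ω | 1 + (n.succ : ℝ≥0∞)⁻¹ ≤ g ω} = 0 := by
    intro n
    set c : ℝ≥0∞ := (n.succ : ℝ≥0∞)⁻¹ with hc
    have hc0 : 0 < c := by
      simp [hc, ENNReal.inv_pos]
    set V := {ω | 1 + c ≤ g ω} with hV
    have hVm : MeasurableSet[m] V := hg measurableSet_Ici
    have h1 : (1 + c) * P V ≤ P V := by
      calc (1 + c) * P V = ∫⁻ _ in V, (1 + c) ∂P := by
            rw [setLIntegral_const, mul_comm]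
        _ ≤ ∫⁻ ω in V, g ω ∂P := by
            refine setLIntegral_mono_ae (hg.mono hm le_rfl).aemeasurable ?_
            exact Filter.Eventually.of_forall fun ω hω => hω
        _ ≤ P V := hbd V hVm
    by_contra h0
    have hPV : 0 < P V := by
      rcases eq_or_ne (P V) 0 with h | h
      · exact absurd h h0
      · exact pos_iff_ne_zero.mpr h
    have hlt : P V < (1 + c) * P V := by
      conv_lhs => rw [← one_mul (P V)]
      exact ENNReal.mul_lt_mul_left (ne_of_gt hPV) (measure_ne_top _ _)
        (ENNReal.lt_add_right ENNReal.one_ne_top (ne_of_gt hc0))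
    exact absurd (lt_of_lt_of_le hlt h1) (lt_irrefl _)
  have : P {ω | 1 < g ω} = 0 := by
    have hsub : {ω | 1 < g ω} ⊆ ⋃ n : ℕ, {ω | 1 + (n.succ : ℝ≥0∞)⁻¹ ≤ g ω} := by
      intro ω hω
      obtain ⟨n, hn⟩ := ENNReal.exists_inv_nat_lt (ne_of_gt (tsub_pos_of_lt hω))
      refine mem_iUnion.mpr ⟨n, ?_⟩
      have hn' : (1 : ℝ≥0∞) + (n.succ : ℝ≥0∞)⁻¹ ≤ g ω := by
        have h1 : ((n.succ : ℝ≥0∞))⁻¹ ≤ (n : ℝ≥0∞)⁻¹ := by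
          exact ENNReal.inv_le_inv.mpr (by exact_mod_cast Nat.cast_le.mpr (Nat.le_succ n))
        have h2 : (1 : ℝ≥0∞) + (n.succ : ℝ≥0∞)⁻¹ ≤ 1 + (n : ℝ≥0∞)⁻¹ := add_le_add_right h1 1
        refine h2.trans ?_
        have h3 : (n : ℝ≥0∞)⁻¹ ≤ g ω - 1 := le_of_lt hn
        calc (1 : ℝ≥0∞) + (n : ℝ≥0∞)⁻¹ ≤ 1 + (g ω - 1) := add_le_add_right h3 1
          _ = g ω := by
            rw [add_tsub_cancel_of_le (le_of_lt hω)]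
      exact hn'
    exact measure_mono_null hsub (by
      rw [measure_iUnion_null_iff]; exact hnull)
  filter_upwards [measure_eq_zero_iff_ae_notMem.mp this] with ω hω
  simpa using hω

lemma exists_condexp_section {m : MeasurableSpace α} [mα : MeasurableSpace α]
    [mβ : MeasurableSpace β] (hm : m ≤ mα) (P : Measure α) [IsProbabilityMeasure P] :
    ∀ S : Set (α × β), MeasurableSet S →
      ∃ h : α × β → ℝ≥0∞, Measurable[m.prod mβ] h ∧
        ∀ x : β, ∀ V : Set α, MeasurableSet[m] V →
          ∫⁻ ω in V, h (ω, x) ∂P = P (V ∩ (fun ω => (ω, x)) ⁻¹' S) := by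
  intro S hS
  refine @MeasurableSpace.induction_on_inter (α × β)
    (mα.prod mβ) (fun S _ => ∃ h : α × β → ℝ≥0∞, Measurable[m.prod mβ] h ∧
        ∀ x : β, ∀ V : Set α, MeasurableSet[m] V →
          ∫⁻ ω in V, h (ω, x) ∂P = P (V ∩ (fun ω => (ω, x)) ⁻¹' S))
    _ (prod_eq_gen mα mβ) (isPiSystem_boxes mα mβ) ?_ ?_ ?_ ?_ S hS
  · -- empty set
    exact ⟨fun _ => 0, measurable_const, fun x V hV => by simp⟩
  · -- rectangles
    rintro _ ⟨U, hU, B, hB, rfl⟩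
    simp only [mem_setOf_eq] at hU hB
    set g₀ : α → ℝ := P[U.indicator (fun _ => (1:ℝ)) | m] with hg₀
    have hint : Integrable (U.indicator fun _ => (1:ℝ)) P := (integrable_const 1).indicator hU
    have hnn : 0 ≤ᵐ[P] g₀ :=
      condExp_nonneg (Filter.Eventually.of_forall fun ω => indicator_nonneg (by simp) ω)
    refine ⟨fun p => B.indicator (fun _ => (1:ℝ≥0∞)) p.2 * ENNReal.ofReal (g₀ p.1), ?_, ?_⟩
    · refine Measurable.mul ?_ ?_
      · exact (measurable_const.indicator hB).comp measurable_snd'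
      · have hg₀m : Measurable[m] g₀ := stronglyMeasurable_condExp.measurable
        exact (ENNReal.measurable_ofReal.comp hg₀m).comp measurable_fst'
    · intro x V hV
      by_cases hx : x ∈ B
      · have hsec : (fun ω => (ω, x)) ⁻¹' (U ×ˢ B) = U := by
          ext ω; simp [hx]
        simp only [hsec, indicator_of_mem hx, one_mul]
        have h1 : ∫⁻ ω in V, ENNReal.ofReal (g₀ ω) ∂P
            = ENNReal.ofReal (∫ ω in V, g₀ ω ∂P) :=
          (ofReal_integral_eq_lintegral_ofReal integrable_condExp.restrict
            (ae_restrict_of_ae hnn)).symm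
        rw [h1, hg₀, setIntegral_condExp hm hint hV]
        rw [setIntegral_indicator hU]
        simp only [integral_const, smul_eq_mul, mul_one]
        rw [measureReal_def, Measure.restrict_apply_univ]
        exact ENNReal.ofReal_toReal (measure_ne_top _ _)
      · have hsec : (fun ω => (ω, x)) ⁻¹' (U ×ˢ B) = ∅ := by
          ext ω; simp [hx]
        simp [hsec, indicator_of_notMem hx]
  · -- complement
    rintro S hSm ⟨h, hmeas, hprop⟩
    have hS' : MeasurableSet[mα.prod mβ] S := hSm
    refine ⟨fun p => 1 - min (h p) 1, ?_, ?_⟩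
    · exact Measurable.sub measurable_const (hmeas.min measurable_const)
    · intro x V hV
      have hsecm : Measurable[m] fun ω => h (ω, x) := hmeas.comp (measurable_mk_left' x)
      have hb : ∀ᵐ ω ∂P, h (ω, x) ≤ 1 := by
        refine ae_le_one_of_forall_setLIntegral_le hm P hsecm fun W hW => ?_
        rw [hprop x W hW]
        exact measure_mono inter_subset_left
      have hminm : Measurable fun ω => min (h (ω, x)) 1 :=
        ((hsecm.mono hm le_rfl).min measurable_const)
      have hmin_eq : ∫⁻ ω in V, min (h (ω, x)) 1 ∂P = P (V ∩ (fun ω => (ω, x)) ⁻¹' S) := by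
        rw [← hprop x V hV]
        refine lintegral_congr_ae ?_
        filter_upwards [ae_restrict_of_ae hb] with ω hω
        rw [min_eq_left hω]
      have hfin : ∫⁻ ω in V, min (h (ω, x)) 1 ∂P ≠ ∞ := by
        rw [hmin_eq]; exact measure_ne_top _ _
      have hsub : ∫⁻ ω in V, (1 - min (h (ω, x)) 1) ∂P
          = ∫⁻ _ in V, (1:ℝ≥0∞) ∂P - ∫⁻ ω in V, min (h (ω, x)) 1 ∂P :=
        lintegral_sub hminm hfin
          (Filter.Eventually.of_forall fun ω => min_le_right _ _)
      rw [hsub, hmin_eq, setLIntegral_one]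
      have hsecS : MeasurableSet (V ∩ (fun ω => (ω, x)) ⁻¹' S) :=
        (hm V hV).inter (section_meas hS' x)
      have hdiff : V ∩ (fun ω => (ω, x)) ⁻¹' Sᶜ = V \ (V ∩ (fun ω => (ω, x)) ⁻¹' S) := by
        ext ω
        simp only [mem_inter_iff, mem_preimage, mem_compl_iff, mem_diff]
        tauto
      rw [hdiff, measure_diff inter_subset_left hsecS.nullMeasurableSet (measure_ne_top _ _)]
  · -- disjoint unions
    intro f hdisj hfm ihf
    choose h hmeas hprop using ihf
    refine ⟨fun p => ∑' n, h n p, Measurable.ennreal_tsum hmeas, ?_⟩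
    intro x V hV
    have h1 : ∫⁻ ω in V, (∑' n, h n (ω, x)) ∂P = ∑' n, ∫⁻ ω in V, h n (ω, x) ∂P := by
      refine lintegral_tsum fun n => ?_
      exact ((hmeas n).comp (measurable_mk_left' x)).mono hm le_rfl |>.aemeasurable
    rw [h1]
    have h2 : ∀ n, ∫⁻ ω in V, h n (ω, x) ∂P = P (V ∩ (fun ω => (ω, x)) ⁻¹' f n) :=
      fun n => hprop n x V hV
    simp_rw [h2]
    have h3 : (⋃ n, V ∩ (fun ω => (ω, x)) ⁻¹' f n) = V ∩ (fun ω => (ω, x)) ⁻¹' ⋃ n, f n := by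
      rw [preimage_iUnion, inter_iUnion]
    rw [← h3, measure_iUnion]
    · intro i j hij
      exact ((hdisj hij).preimage _).mono inter_subset_right inter_subset_right
    · intro n
      exact (hm V hV).inter (section_meas (hfm n : MeasurableSet[mα.prod mβ] (f n)) x)

end JacodAux

open JacodAux

/-- If `F` is right-continuous and `P`-complete and Jacod's density
hypothesis holds, then the initially enlarged filtration `G⁰_t = F_t ⊔ σ(L)` is
right-continuous. -/
theorem initially_enlarged_right_continuous
    {Ω : Type*} {mΩ : MeasurableSpace Ω} {P : Measure Ω} [IsProbabilityMeasure P]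
    {E : Type*} [MeasurableSpace E] [StandardBorelSpace E]
    (F : Filtration ℝ≥0 mΩ)
    (hF_rc : ∀ t : ℝ≥0, F t = ⨅ (ε : ℝ≥0) (_ : 0 < ε), F (t + ε))
    (L : Ω → E) (hL : Measurable L)
    (lam : Measure E) (hlam : P.map L = lam)
    (ν : ℝ≥0 → Ω → Measure E)
    (hν_prob : ∀ (t : ℝ≥0) (ω : Ω), IsProbabilityMeasure (ν t ω))
    (hν_meas : ∀ (t : ℝ≥0) (B : Set E), MeasurableSet B →
      Measurable[F t] fun ω => ν t ω B)
    (hν_cond : ∀ (t : ℝ≥0) (B : Set E), MeasurableSet B →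
      ∀ A : Set Ω, MeasurableSet[F t] A →
        ∫⁻ ω in A, ν t ω B ∂P = P (A ∩ L ⁻¹' B))
    (hF_complete : ∀ (t : ℝ≥0) (s : Set Ω), P s = 0 → MeasurableSet[F t] s)
    (hJacod : ∀ t : ℝ≥0, ∀ᵐ ω ∂P, ν t ω ≪ lam) :
    ∀ t : ℝ≥0,
      F t ⊔ MeasurableSpace.comap L inferInstance =
        ⨅ (ε : ℝ≥0) (_ : 0 < ε),
          (F (t + ε) ⊔ MeasurableSpace.comap L inferInstance) := by
  intro t
  set mE : MeasurableSpace E := inferInstance with hmE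
  haveI : IsProbabilityMeasure lam := hlam ▸ Measure.isProbabilityMeasure_map hL.aemeasurable
  set emb : Ω → Ω × E := fun ω => (ω, L ω) with hemb_def
  have hemb : Measurable emb := measurable_id.prodMk hL
  refine le_antisymm ?_ ?_
  · refine le_iInf fun ε => le_iInf fun hε => ?_
    exact sup_le_sup_right (F.mono le_self_add) _
  · -- hard direction
    intro A hA
    have hA' : ∀ ε : ℝ≥0, 0 < ε →
        MeasurableSet[F (t + ε) ⊔ MeasurableSpace.comap L mE] A := by
      intro ε hε
      have h1 := MeasurableSpace.measurableSet_iInf.mp hA ε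
      exact MeasurableSpace.measurableSet_iInf.mp h1 hε
    set δ : ℕ → ℝ≥0 := fun n => ((n : ℝ≥0) + 1)⁻¹ with hδ
    have hδpos : ∀ n, 0 < δ n := fun n => by positivity
    have hδanti : ∀ m k : ℕ, δ (m + k) ≤ δ m := by
      intro m k
      have : ((m : ℝ≥0) + 1) ≤ ((m + k : ℕ) : ℝ≥0) + 1 := by
        push_cast; gcongr; simp
      exact inv_anti₀ (by positivity) this
    have hδle : ∀ ε : ℝ≥0, 0 < ε → ∃ n, δ n ≤ ε := by
      intro ε hε
      obtain ⟨n, hn⟩ := exists_nat_gt (ε⁻¹ : ℝ≥0)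
      refine ⟨n, ?_⟩
      have h1 : ε⁻¹ ≤ (n : ℝ≥0) + 1 := le_of_lt (hn.trans_le (by simp))
      have h2 : ((n : ℝ≥0) + 1)⁻¹ ≤ (ε⁻¹)⁻¹ := inv_anti₀ (by positivity) h1
      rwa [inv_inv] at h2
    -- choose product representatives
    have hSn : ∀ n : ℕ, ∃ S' : Set (Ω × E),
        MeasurableSet[(F (t + δ n)).prod mE] S' ∧ emb ⁻¹' S' = A := by
      intro n
      have h1 := hA' (δ n) (hδpos n)
      rw [sup_comap_eq mE L] at h1
      exact MeasurableSpace.measurableSet_comap.mp h1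
    choose S hSmeas hSpre using hSn
    set U : ℕ → Set (Ω × E) := fun j => ⋃ k, S (j + k) with hU
    have hU_meas : ∀ j, MeasurableSet[(F (t + δ j)).prod mE] (U j) := by
      intro j
      refine MeasurableSet.iUnion fun k => ?_
      have hle : (F (t + δ (j + k))).prod mE ≤ (F (t + δ j)).prod mE :=
        prod_mono_left mE (F.mono (add_le_add_right (hδanti j k) t))
      exact hle _ (hSmeas (j + k))
    have hU_anti : ∀ j j' : ℕ, j ≤ j' → U j' ⊆ U j := by
      intro j j' hjj' p hp
      obtain ⟨k, hk⟩ := mem_iUnion.mp hp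
      exact mem_iUnion.mpr ⟨(j' - j) + k, by
        have : j + ((j' - j) + k) = j' + k := by omega
        rw [this]; exact hk⟩
    set Sl : Set (Ω × E) := ⋂ j, U j with hSl
    have hSl_eq : ∀ m : ℕ, Sl = ⋂ j, U (m + j) := by
      intro m
      refine subset_antisymm ?_ ?_
      · exact fun p hp => mem_iInter.mpr fun j => mem_iInter.mp hp (m + j)
      · intro p hp
        refine mem_iInter.mpr fun j => ?_
        exact hU_anti j (m + j) (by omega) (mem_iInter.mp hp j)
    have hSl_mem : ∀ m : ℕ, MeasurableSet[(F (t + δ m)).prod mE] Sl := by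
      intro m
      rw [hSl_eq m]
      refine MeasurableSet.iInter fun j => ?_
      have hle : (F (t + δ (m + j))).prod mE ≤ (F (t + δ m)).prod mE :=
        prod_mono_left mE (F.mono (add_le_add_right (hδanti m j) t))
      exact hle _ (hU_meas (m + j))
    have hApre : emb ⁻¹' Sl = A := by
      rw [hSl]
      rw [preimage_iInter]
      have : ∀ j, emb ⁻¹' U j = A := by
        intro j
        rw [hU]
        simp only [preimage_iUnion, hSpre, iUnion_const]
      simp only [this, iInter_const]
    -- sections of Sl are F t measurable
    have hsec : ∀ x : E, MeasurableSet[F t] ((fun ω => (ω, x)) ⁻¹' Sl) := by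
      intro x
      rw [hF_rc t]
      refine MeasurableSpace.measurableSet_iInf.mpr fun ε => ?_
      refine MeasurableSpace.measurableSet_iInf.mpr fun hε => ?_
      obtain ⟨n, hn⟩ := hδle ε hε
      have h1 : MeasurableSet[F (t + δ n)] ((fun ω => (ω, x)) ⁻¹' Sl) :=
        section_meas (hSl_mem n) x
      exact F.mono (add_le_add_right hn t) _ h1
    -- s₁ = t + 1
    set s₁ : ℝ≥0 := t + 1 with hs₁
    have hδ0 : t + δ 0 = s₁ := by
      rw [hδ]; norm_num; rfl
    have hSl_s1 : MeasurableSet[(F s₁).prod mE] Sl := by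
      rw [← hδ0]; exact hSl_mem 0
    have hSl_amb : MeasurableSet Sl :=
      (prod_mono_left mE (F.le s₁)) _ hSl_s1
    -- jointly measurable conditional expectation
    obtain ⟨h, hmeas, hprop⟩ := exists_condexp_section (F.le t) P Sl hSl_amb
    -- per-x a.e. identification with the indicator
    have key : ∀ x : E, (fun ω => h (ω, x))
        =ᵐ[P] ((fun ω => (ω, x)) ⁻¹' Sl).indicator (fun _ => (1:ℝ≥0∞)) := by
      intro x
      set d : Set Ω := (fun ω => (ω, x)) ⁻¹' Sl with hd
      have hdm : MeasurableSet[F t] d := hsec x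
      have hdm' : MeasurableSet d := F.le t _ hdm
      refine ae_eq_of_ae_eq_trim (hm := F.le t) ?_
      haveI : IsFiniteMeasure (P.trim (F.le t)) := isFiniteMeasure_trim _
      refine ae_eq_of_forall_setLIntegral_eq_of_sigmaFinite
        (hmeas.comp (measurable_mk_left' x)) (measurable_const.indicator hdm)
        fun V hV _ => ?_
      have htrim : ∀ (f : Ω → ℝ≥0∞), Measurable[F t] f →
          ∫⁻ ω in V, f ω ∂(P.trim (F.le t)) = ∫⁻ ω in V, f ω ∂P := by
        intro f hf
        rw [restrict_trim (F.le t) P hV, lintegral_trim _ hf]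
      rw [htrim (fun ω => h (ω, x)) (hmeas.comp (measurable_mk_left' x)),
        htrim (d.indicator fun _ => (1:ℝ≥0∞)) (measurable_const.indicator hdm)]
      rw [hprop x V hV]
      rw [lintegral_indicator hdm', setLIntegral_one, Measure.restrict_apply hdm']
      rw [inter_comm]
    -- the bad set is null for the product measure
    set ind : Ω × E → ℝ≥0∞ := Sl.indicator (fun _ => 1) with hind
    have hhm : Measurable h := hmeas.mono (prod_mono_left mE (F.le t)) le_rfl
    have hindm : Measurable ind := measurable_const.indicator hSl_amb
    set N : Set (Ω × E) := {p | h p ≠ ind p} with hN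
    have hNm : MeasurableSet N :=
      (hhm.stronglyMeasurable.measurableSet_eq_fun hindm.stronglyMeasurable).compl
    have hQN : (P.prod lam) N = 0 := by
      have hswap : (P.prod lam) N = (lam.prod P) (Prod.swap ⁻¹' N) := by
        rw [← Measure.prod_swap, Measure.map_apply measurable_swap hNm]
      rw [hswap]
      rw [Measure.measure_prod_null (measurable_swap hNm)]
      refine Filter.Eventually.of_forall fun x => ?_
      simp only [Pi.zero_apply]
      have h1 : Prod.mk x ⁻¹' (Prod.swap ⁻¹' N) = {ω | h (ω, x) ≠ ind (ω, x)} := rfl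
      rw [h1]
      have hindeq : ∀ ω : Ω, ind (ω, x)
          = ((fun ω => (ω, x)) ⁻¹' Sl).indicator (fun _ => (1:ℝ≥0∞)) ω := by
        intro ω
        by_cases hmem : (ω, x) ∈ Sl
        · rw [hind, indicator_of_mem hmem,
            indicator_of_mem (show ω ∈ (fun ω => (ω, x)) ⁻¹' Sl from hmem)]
        · rw [hind, indicator_of_notMem hmem,
            indicator_of_notMem (show ω ∉ (fun ω => (ω, x)) ⁻¹' Sl from hmem)]
      have hseteq : {ω | h (ω, x) ≠ ind (ω, x)}
          = {ω | ¬ h (ω, x) = ((fun ω => (ω, x)) ⁻¹' Sl).indicator (fun _ => (1:ℝ≥0∞)) ω} := by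
        ext ω
        rw [mem_setOf_eq, mem_setOf_eq, hindeq ω]
      rw [hseteq]
      have h3 := key x
      rw [Filter.EventuallyEq, ae_iff] at h3
      exact h3
    -- define T and the symmetric difference D
    set T : Set (Ω × E) := h ⁻¹' {1} with hT_def
    have hT : MeasurableSet[(F t).prod mE] T := hmeas (measurableSet_singleton 1)
    set D : Set (Ω × E) := (Sl \ T) ∪ (T \ Sl) with hD_def
    have hDsubN : D ⊆ N := by
      rintro p (⟨hp1, hp2⟩ | ⟨hp1, hp2⟩)
      · have : ind p = 1 := indicator_of_mem hp1 _
        simp only [hN, mem_setOf_eq, this]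
        intro hc; exact hp2 (by simpa [hT_def] using hc)
      · have h1 : h p = 1 := by simpa [hT_def] using hp1
        have h2 : ind p = 0 := indicator_of_notMem hp2 _
        simp [hN, h1, h2]
    have hQD : (P.prod lam) D = 0 := measure_mono_null hDsubN hQN
    have hD_s1 : MeasurableSet[(F s₁).prod mE] D := by
      have hT_s1 : MeasurableSet[(F s₁).prod mE] T :=
        prod_mono_left mE (F.mono le_self_add) _ hT
      exact (hSl_s1.diff hT_s1).union (hT_s1.diff hSl_s1)
    have hD_amb : MeasurableSet D := (prod_mono_left mE (F.le s₁)) _ hD_s1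
    -- the kernel at time s₁
    set κ : ProbabilityTheory.Kernel Ω E :=
      ⟨fun ω => ν s₁ ω, Measure.measurable_of_measurable_coe _
        (fun B hB => (hν_meas s₁ B hB).mono (F.le s₁) le_rfl)⟩ with hκ
    haveI : ProbabilityTheory.IsMarkovKernel κ := ⟨fun ω => hν_prob s₁ ω⟩
    haveI : IsProbabilityMeasure (P.map emb) := Measure.isProbabilityMeasure_map hemb.aemeasurable
    have hrect : ∀ Uu B, MeasurableSet[F s₁] Uu → MeasurableSet B →
        (P.map emb) (Uu ×ˢ B) = (P ⊗ₘ κ) (Uu ×ˢ B) := by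
      intro Uu B hUu hB
      have hUu' : MeasurableSet Uu := F.le s₁ _ hUu
      rw [Measure.map_apply hemb (hUu'.prod hB)]
      rw [Measure.compProd_apply_prod hUu' hB]
      have hpre : emb ⁻¹' (Uu ×ˢ B) = Uu ∩ L ⁻¹' B := by
        ext ω; simp [hemb_def]
      rw [hpre, ← hν_cond s₁ B hB Uu hUu]
      rfl
    have hmeq := measure_eq_on_subprod (F.le s₁) (P.map emb) (P ⊗ₘ κ) hrect D hD_s1
    -- conclude P(A Δ A') = 0
    set A' : Set Ω := emb ⁻¹' T with hA'_def
    have hpreD : (A \ A') ∪ (A' \ A) = emb ⁻¹' D := by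
      rw [hD_def, preimage_union, preimage_diff, preimage_diff, hApre]
    have hnull : P ((A \ A') ∪ (A' \ A)) = 0 := by
      rw [hpreD, ← Measure.map_apply hemb hD_amb, hmeq,
        Measure.compProd_apply hD_amb]
      have hae : (fun ω => κ ω (Prod.mk ω ⁻¹' D)) =ᵐ[P] 0 := by
        have h1 := (Measure.measure_prod_null hD_amb).mp hQD
        filter_upwards [h1, hJacod s₁] with ω hω1 hω2
        have : κ ω = ν s₁ ω := rfl
        rw [this]
        exact hω2 hω1
      rw [lintegral_congr_ae hae]
      simp
    have hnull1 : P (A \ A') = 0 := measure_mono_null subset_union_left hnull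
    have hnull2 : P (A' \ A) = 0 := measure_mono_null subset_union_right hnull
    have hs1m : MeasurableSet[F t] (A \ A') := hF_complete t _ hnull1
    have hs2m : MeasurableSet[F t] (A' \ A) := hF_complete t _ hnull2
    have hA'm : MeasurableSet[F t ⊔ MeasurableSpace.comap L mE] A' := by
      rw [sup_comap_eq mE L]
      exact MeasurableSpace.measurableSet_comap.mpr ⟨T, hT, rfl⟩
    have hlift : F t ≤ F t ⊔ MeasurableSpace.comap L mE := le_sup_left
    have hAid : A = (A' \ (A' \ A)) ∪ (A \ A') := by
      ext p
      simp only [mem_union, mem_diff]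
      tauto
    rw [hAid]
    exact (hA'm.diff (hlift _ hs2m)).union (hlift _ hs1m)
end

section
/- Suppose that F is right-continuous and P-complete and that Jacod's density hypothesis holds. Let Z = (Z_t)_{t≥0} be a real-valued G-adapted process all of whose paths are right-continuous. Then there exists a jointly measurable function z : E × Ω × [0,∞) → ℝ such that for every x ∈ E the process (z^x_t)_{t≥0} is F-progressively measurable, and for every t ≥ 0, Z_t = z^{L}_t P-a.s. -/
open MeasureTheory Set Filter
open scoped ENNReal NNReal Topology

namespace JacodParam

noncomputable def del (n : ℕ) : ℝ≥0 := ((2 : ℝ≥0) ^ n)⁻¹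

lemma del_pos (n : ℕ) : 0 < del n := by unfold del; positivity

lemma del_anti : Antitone del := fun m n h => by
  unfold del
  rw [← inv_pow, ← inv_pow]
  exact pow_le_pow_of_le_one zero_le (by norm_num) h

lemma del_half (n : ℕ) : del (n + 1) + del (n + 1) = del n := by
  unfold del
  rw [← inv_pow, ← inv_pow, ← two_mul, pow_succ, mul_comm ((2:ℝ≥0)⁻¹ ^ n), ← mul_assoc]
  norm_num

lemma del_tendsto : Tendsto del atTop (𝓝 0) := by
  have h : del = fun n => ((2:ℝ≥0)⁻¹) ^ n := by funext n; unfold del; rw [inv_pow]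
  rw [h]
  exact NNReal.tendsto_pow_atTop_nhds_zero_of_lt_one (inv_lt_one_of_one_lt₀ one_lt_two)

lemma del_small {c : ℝ≥0} (hc : 0 < c) : ∃ m, del m ≤ c := by
  obtain ⟨m, hm⟩ := (del_tendsto.eventually (Iio_mem_nhds hc)).exists
  exact ⟨m, hm.le⟩

noncomputable def tau (n k : ℕ) : ℝ≥0 := (k : ℝ≥0) * del n

noncomputable def kap (n : ℕ) (t : ℝ≥0) : ℕ := ⌈t * (2:ℝ≥0) ^ n⌉₊

lemma le_tau_kap (n : ℕ) (t : ℝ≥0) : t ≤ tau n (kap n t) := by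
  unfold tau kap del
  have h1 : (t * (2:ℝ≥0)^n) ≤ (⌈t * (2:ℝ≥0)^n⌉₊ : ℝ≥0) := Nat.le_ceil _
  calc t = t * (2:ℝ≥0)^n * ((2:ℝ≥0)^n)⁻¹ := by
        rw [mul_assoc, mul_inv_cancel₀ (by positivity), mul_one]
    _ ≤ _ := mul_le_mul_left h1 _

lemma tau_kap_le (n : ℕ) (t : ℝ≥0) : tau n (kap n t) ≤ t + del n := by
  unfold tau kap del
  have h1 : (⌈t * (2:ℝ≥0)^n⌉₊ : ℝ≥0) ≤ t * (2:ℝ≥0)^n + 1 := (Nat.ceil_lt_add_one zero_le).le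
  calc (⌈t * (2:ℝ≥0)^n⌉₊ : ℝ≥0) * ((2:ℝ≥0)^n)⁻¹ ≤ (t * (2:ℝ≥0)^n + 1) * ((2:ℝ≥0)^n)⁻¹ :=
        mul_le_mul_left h1 _
    _ = t + ((2:ℝ≥0)^n)⁻¹ := by
        rw [add_mul, mul_assoc, mul_inv_cancel₀ (by positivity), mul_one, one_mul]

lemma kap_measurable (n : ℕ) : Measurable (kap n) :=
  Nat.measurable_ceil.comp (measurable_id.mul_const _)

lemma measurable_factor {α β : Type*} {mβ : MeasurableSpace β} {g : α → β} {f : α → ℝ}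
    (hf : Measurable[mβ.comap g] f) :
    ∃ h : β → ℝ, Measurable[mβ] h ∧ ∀ a, f a = h (g a) := by
  classical
  have key : ∀ q : ℚ, ∃ S : Set β, MeasurableSet[mβ] S ∧ g ⁻¹' S = f ⁻¹' (Iio (q : ℝ)) :=
    fun q => MeasurableSpace.measurableSet_comap.mp (hf measurableSet_Iio)
  choose S hSm hSe using key
  refine ⟨fun b => (⨅ q : ℚ, if b ∈ S q then ((q : ℝ) : EReal) else ⊤).toReal, ?_, ?_⟩
  · exact Measurable.ereal_toReal
      (Measurable.iInf fun q => Measurable.ite (hSm q) measurable_const measurable_const)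
  · intro a
    have hmem : ∀ q : ℚ, g a ∈ S q ↔ f a < (q : ℝ) := by
      intro q
      have h0 : a ∈ g ⁻¹' S q ↔ a ∈ f ⁻¹' Iio (q : ℝ) := by rw [hSe q]
      simpa using h0
    have hEq : (⨅ q : ℚ, if g a ∈ S q then ((q : ℝ) : EReal) else ⊤) = ((f a : ℝ) : EReal) := by
      apply le_antisymm
      · refine le_of_forall_gt_imp_ge_of_dense fun b hb => ?_
        obtain ⟨q, hq1, hq2⟩ := EReal.exists_rat_btwn_of_lt hb
        refine le_trans (iInf_le _ q) ?_
        rw [if_pos ((hmem q).mpr (by exact_mod_cast hq1))]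
        exact hq2.le
      · refine le_iInf fun q => ?_
        split_ifs with h
        · exact_mod_cast ((hmem q).mp h).le
        · exact le_top
    show f a = (⨅ q : ℚ, if g a ∈ S q then ((q : ℝ) : EReal) else ⊤).toReal
    rw [hEq, EReal.toReal_coe]

lemma comap_pair {α β : Type*} (mE : MeasurableSpace β) (m : MeasurableSpace α)
    (L : α → β) :
    (mE.prod m).comap (fun a => (L a, a)) = mE.comap L ⊔ m := by
  rw [MeasurableSpace.prod, MeasurableSpace.comap_sup, MeasurableSpace.comap_comp,
    MeasurableSpace.comap_comp]
  have h1 : (Prod.fst ∘ fun a : α => (L a, a)) = L := rfl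
  have h2 : (Prod.snd ∘ fun a : α => (L a, a)) = id := rfl
  rw [h1, h2, MeasurableSpace.comap_id]

lemma prod_mono {α β : Type*} (mE : MeasurableSpace β) {m m' : MeasurableSpace α}
    (h : m ≤ m') : mE.prod m ≤ mE.prod m' := by
  rw [MeasurableSpace.prod, MeasurableSpace.prod]
  exact sup_le_sup le_rfl (MeasurableSpace.comap_mono h)

end JacodParam

open JacodParam

/-- Every right-continuous `G`-adapted process `Z` is of the form
`Z_t = z^L_t` `P`-a.s., for a jointly measurable family `z` with `(z^x_t)` being
`F`-progressively measurable for every `x`. -/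
theorem G_adapted_process_parametrization
    {Ω : Type*} {mΩ : MeasurableSpace Ω} {P : Measure Ω} [IsProbabilityMeasure P]
    {E : Type*} [MeasurableSpace E] [StandardBorelSpace E]
    (F : Filtration ℝ≥0 mΩ)
    (hF_rc : ∀ t : ℝ≥0, F t = ⨅ (ε : ℝ≥0) (_ : 0 < ε), F (t + ε))
    (L : Ω → E) (hL : Measurable L)
    (lam : Measure E) (hlam : P.map L = lam)
    (ν : ℝ≥0 → Ω → Measure E)
    (hν_prob : ∀ (t : ℝ≥0) (ω : Ω), IsProbabilityMeasure (ν t ω))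
    (hν_meas : ∀ (t : ℝ≥0) (B : Set E), MeasurableSet B →
      Measurable[F t] fun ω => ν t ω B)
    (hν_cond : ∀ (t : ℝ≥0) (B : Set E), MeasurableSet B →
      ∀ A : Set Ω, MeasurableSet[F t] A →
        ∫⁻ ω in A, ν t ω B ∂P = P (A ∩ L ⁻¹' B))
    (hF_complete : ∀ (t : ℝ≥0) (s : Set Ω), P s = 0 → MeasurableSet[F t] s)
    (hJacod : ∀ t : ℝ≥0, ∀ᵐ ω ∂P, ν t ω ≪ lam)
    (Z : ℝ≥0 → Ω → ℝ)
    (hZ_adapted : ∀ t : ℝ≥0,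
      Measurable[⨅ (ε : ℝ≥0) (_ : 0 < ε),
        (F (t + ε) ⊔ MeasurableSpace.comap L inferInstance)] (Z t))
    (hZ_rc : ∀ (ω : Ω) (t : ℝ≥0),
      ContinuousWithinAt (fun s => Z s ω) (Set.Ici t) t) :
    ∃ z : E → Ω → ℝ≥0 → ℝ,
      Measurable (fun p : E × Ω × ℝ≥0 => z p.1 p.2.1 p.2.2) ∧
      (∀ x : E, ProgMeasurable F fun t ω => z x ω t) ∧
      ∀ t : ℝ≥0, ∀ᵐ ω ∂P, Z t ω = z (L ω) ω t := by
  classical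
  -- factorize `Z` at dyadic times
  have hfac : ∀ n k : ℕ, ∃ h : E × Ω → ℝ,
      Measurable[(inferInstance : MeasurableSpace E).prod (F (tau n k + del n))] h ∧
      ∀ ω, Z (tau n k) ω = h (L ω, ω) := by
    intro n k
    apply measurable_factor
    rw [comap_pair]
    have h1 : Measurable[F (tau n k + del n) ⊔ MeasurableSpace.comap L inferInstance]
        (Z (tau n k)) :=
      (hZ_adapted (tau n k)).mono (iInf₂_le (del n) (del_pos n)) le_rfl
    exact h1.mono (le_of_eq (sup_comm _ _)) le_rfl
  choose g hg_meas hg_eq using hfac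
  -- the approximating sequence
  set W : ℕ → E → Ω → ℝ≥0 → EReal :=
    fun n x ω t => ((g n (kap n t) (x, ω) : ℝ) : EReal) with hW
  set z : E → Ω → ℝ≥0 → ℝ :=
    fun x ω t => (limsup (fun n => W n x ω t) atTop).toReal with hz
  refine ⟨z, ?_, ?_, ?_⟩
  · -- joint measurability
    have hWm : ∀ n, Measurable fun p : E × Ω × ℝ≥0 => W n p.1 p.2.1 p.2.2 := by
      intro n
      have hGm : Measurable fun q : (E × Ω) × ℕ => g n q.2 q.1 :=
        measurable_from_prod_countable_left fun k =>
          (hg_meas n k).mono (prod_mono _ (F.le _)) le_rfl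
      have hmapm : Measurable fun p : E × Ω × ℝ≥0 => ((p.1, p.2.1), kap n p.2.2) :=
        (measurable_fst.prodMk measurable_snd.fst).prodMk
          ((kap_measurable n).comp measurable_snd.snd)
      exact measurable_coe_real_ereal.comp (hGm.comp hmapm)
    have hzz : (fun p : E × Ω × ℝ≥0 => z p.1 p.2.1 p.2.2)
        = fun p => (limsup (fun n => W n p.1 p.2.1 p.2.2) atTop).toReal := by
      funext p; rw [hz]
    rw [hzz]
    exact (Measurable.limsup fun n => hWm n).ereal_toReal
  · -- progressive measurability in the first variable
    intro x
    -- fixed-time measurability of each approximant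
    have hW_time : ∀ (n : ℕ) (s v : ℝ≥0), s + (del n + del n) ≤ v →
        Measurable[F v] fun ω => W n x ω s := by
      intro n s v hv
      have h1 : tau n (kap n s) + del n ≤ v := by
        calc tau n (kap n s) + del n ≤ (s + del n) + del n :=
              add_le_add_left (tau_kap_le n s) _
          _ = s + (del n + del n) := by rw [add_assoc]
          _ ≤ v := hv
      have h2 : Measurable[F v] fun ω => g n (kap n s) (x, ω) := by
        have h3 := (hg_meas n (kap n s)).mono (prod_mono _ (F.mono h1)) le_rfl
        exact h3.comp (measurable_const.prodMk measurable_id)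
      exact measurable_coe_real_ereal.comp h2
    -- fixed-time measurability of `z x · s`
    have hz_time : ∀ s : ℝ≥0, Measurable[F s] fun ω => z x ω s := by
      intro s
      rw [hF_rc s]
      intro B hB
      refine MeasurableSpace.measurableSet_iInf.mpr fun ε => ?_
      refine MeasurableSpace.measurableSet_iInf.mpr fun hε => ?_
      obtain ⟨m, hm⟩ := del_small (c := ε / 2) (by positivity)
      have hm2 : del m + del m ≤ ε := by
        calc del m + del m ≤ ε / 2 + ε / 2 := add_le_add hm hm
          _ = ε := add_halves ε
      have hmeas : Measurable[F (s + ε)] fun ω => z x ω s := by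
        have hshift : (fun ω => z x ω s)
            = fun ω => (limsup (fun n => W (n + m) x ω s) atTop).toReal := by
          funext ω
          simp only [hz]
          rw [Filter.limsup_nat_add (fun j => W j x ω s) m]
        rw [hshift]
        refine Measurable.ereal_toReal (Measurable.limsup fun n => ?_)
        refine hW_time (n + m) s (s + ε) ?_
        have hδ : del (n + m) + del (n + m) ≤ del m + del m :=
          add_le_add (del_anti (Nat.le_add_left m n)) (del_anti (Nat.le_add_left m n))
        exact add_le_add_right (hδ.trans hm2) s
      exact hmeas hB
    -- now the progressive measurability
    intro u
    apply Measurable.stronglyMeasurable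
    intro B hB
    -- pieces strictly before time `u`
    have hpiece : ∀ k : ℕ, MeasurableSet[Subtype.instMeasurableSpace.prod (F u)]
        {p : Set.Iic u × Ω | (p.1 : ℝ≥0) + del k ≤ u ∧ z x p.2 ↑p.1 ∈ B} := by
      intro k
      have hNδ : ∀ n : ℕ, del (n + (k + 2)) + del (n + (k + 2)) ≤ del k := by
        intro n
        have h1 : del (n + (k + 2)) ≤ del (k + 2) := del_anti (Nat.le_add_left _ n)
        calc del (n + (k + 2)) + del (n + (k + 2)) ≤ del (k + 2) + del (k + 2) :=
              add_le_add h1 h1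
          _ = del (k + 1) := del_half (k + 1)
          _ ≤ del k := del_anti (Nat.le_succ k)
      set Y : ℕ → Set.Iic u × Ω → EReal := fun n p =>
        if (p.1 : ℝ≥0) + del k ≤ u then W (n + (k + 2)) x p.2 ↑p.1 else 0 with hY
      have hm1 : Measurable[Subtype.instMeasurableSpace.prod (F u)]
          fun p : Set.Iic u × Ω => (p.1 : ℝ≥0) :=
        measurable_subtype_coe.comp measurable_fst
      have hYmeas : ∀ n, Measurable[Subtype.instMeasurableSpace.prod (F u)] (Y n) := by
        intro n
        set N := n + (k + 2) with hN
        set G2 : (Set.Iic u × Ω) × ℕ → EReal := fun q =>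
          if tau N q.2 + del N ≤ u then
            (if (q.1.1 : ℝ≥0) + del k ≤ u ∧ kap N ↑q.1.1 = q.2
              then ((g N q.2 (x, q.1.2) : ℝ) : EReal) else 0)
          else 0 with hG2
        have hG2meas : Measurable[(Subtype.instMeasurableSpace.prod (F u)).prod
            (inferInstance : MeasurableSpace ℕ)] G2 := by
          apply measurable_from_prod_countable_left
          intro j
          by_cases hj : tau N j + del N ≤ u
          · have hval : Measurable[Subtype.instMeasurableSpace.prod (F u)]
                fun p : Set.Iic u × Ω => ((g N j (x, p.2) : ℝ) : EReal) := by
              have h3 := (hg_meas N j).mono (prod_mono _ (F.mono hj)) le_rfl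
              exact measurable_coe_real_ereal.comp
                (h3.comp (measurable_const.prodMk measurable_snd))
            have hset : MeasurableSet[Subtype.instMeasurableSpace.prod (F u)]
                {p : Set.Iic u × Ω | (p.1 : ℝ≥0) + del k ≤ u ∧ kap N ↑p.1 = j} := by
              have ha := (hm1.add_const (del k)) (measurableSet_Iic (a := u))
              have hb := ((kap_measurable N).comp hm1) (measurableSet_singleton j)
              exact ha.inter hb
            have : (fun p : Set.Iic u × Ω => G2 (p, j))
                = fun p => if (p.1 : ℝ≥0) + del k ≤ u ∧ kap N ↑p.1 = j
                    then ((g N j (x, p.2) : ℝ) : EReal) else 0 := by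
              funext p; rw [hG2]; simp only [if_pos hj]
            rw [this]
            exact Measurable.ite hset hval measurable_const
          · have : (fun p : Set.Iic u × Ω => G2 (p, j)) = fun _ => (0 : EReal) := by
              funext p; rw [hG2]; simp only [if_neg hj]
            rw [this]
            exact measurable_const
        have hjj : ∀ p : Set.Iic u × Ω, (p.1 : ℝ≥0) + del k ≤ u →
            tau N (kap N ↑p.1) + del N ≤ u := by
          intro p hp
          calc tau N (kap N ↑p.1) + del N ≤ ((p.1 : ℝ≥0) + del N) + del N :=
                add_le_add_left (tau_kap_le N ↑p.1) _
            _ = (p.1 : ℝ≥0) + (del N + del N) := by rw [add_assoc]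
            _ ≤ (p.1 : ℝ≥0) + del k := add_le_add_right (hNδ n) _
            _ ≤ u := hp
        have hYG : Y n = fun p => G2 (p, kap N ↑p.1) := by
          funext p
          simp only [hY, hG2]
          split_ifs with h1 h2 h3 h4 h5 <;>
            first
              | rfl
              | (exact absurd (hjj p h1) h2)
              | (exact absurd ⟨h1, by trivial⟩ h3)
              | (exact absurd h4.1 h1)
              | (exact absurd h5.1 h1)
        rw [hYG]
        exact hG2meas.comp (measurable_id.prodMk ((kap_measurable N).comp hm1))
      have hVmeas : Measurable[Subtype.instMeasurableSpace.prod (F u)]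
          fun p : Set.Iic u × Ω => (limsup (fun n => Y n p) atTop).toReal :=
        (Measurable.limsup hYmeas).ereal_toReal
      have hEq : {p : Set.Iic u × Ω | (p.1 : ℝ≥0) + del k ≤ u ∧ z x p.2 ↑p.1 ∈ B}
          = {p : Set.Iic u × Ω | (p.1 : ℝ≥0) + del k ≤ u}
            ∩ ((fun p : Set.Iic u × Ω =>
                (limsup (fun n => Y n p) atTop).toReal) ⁻¹' B) := by
        ext p
        simp only [mem_setOf_eq, mem_inter_iff, mem_preimage]
        refine and_congr_right fun hp => ?_
        have hYW : (fun n => Y n p) = fun n => W (n + (k + 2)) x p.2 ↑p.1 := by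
          funext n; simp only [hY, if_pos hp]
        rw [hYW, Filter.limsup_nat_add (fun j => W j x p.2 ↑p.1) (k + 2)]
      rw [hEq]
      have hDk : MeasurableSet[Subtype.instMeasurableSpace.prod (F u)]
          {p : Set.Iic u × Ω | (p.1 : ℝ≥0) + del k ≤ u} :=
        (hm1.add_const (del k)) (measurableSet_Iic (a := u))
      exact hDk.inter (hVmeas hB)
    -- piece at time `u` exactly
    have hslice : MeasurableSet[Subtype.instMeasurableSpace.prod (F u)]
        {p : Set.Iic u × Ω | (p.1 : ℝ≥0) = u ∧ z x p.2 u ∈ B} := by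
      have h1 : {p : Set.Iic u × Ω | (p.1 : ℝ≥0) = u ∧ z x p.2 u ∈ B}
          = ((fun q : Set.Iic u => (q : ℝ≥0)) ⁻¹' {u}) ×ˢ ((fun ω => z x ω u) ⁻¹' B) := by
        ext p
        simp only [mem_setOf_eq, Set.mem_prod, mem_preimage, mem_singleton_iff]
      rw [h1]
      exact MeasurableSet.prod (measurable_subtype_coe (measurableSet_singleton u))
        (hz_time u hB)
    -- decomposition
    have hcover : (fun p : Set.Iic u × Ω => z x p.2 ↑p.1) ⁻¹' B
        = (⋃ k : ℕ, {p : Set.Iic u × Ω | (p.1 : ℝ≥0) + del k ≤ u ∧ z x p.2 ↑p.1 ∈ B})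
          ∪ {p : Set.Iic u × Ω | (p.1 : ℝ≥0) = u ∧ z x p.2 u ∈ B} := by
      ext p
      simp only [mem_preimage, mem_union, mem_iUnion, mem_setOf_eq]
      constructor
      · intro hp
        rcases eq_or_lt_of_le (mem_Iic.mp p.1.2) with he | hlt
        · refine Or.inr ⟨he, ?_⟩
          rwa [he] at hp
        · left
          obtain ⟨k, hk⟩ := del_small (tsub_pos_of_lt hlt)
          refine ⟨k, ?_, hp⟩
          have := (le_tsub_iff_right hlt.le).mp hk
          rwa [add_comm] at this
      · rintro (⟨k, _, hp⟩ | ⟨he, hp⟩)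
        · exact hp
        · rw [he]; exact hp
    rw [hcover]
    exact (MeasurableSet.iUnion hpiece).union hslice
  · -- a.s. identity (in fact everywhere)
    intro t
    refine Filter.Eventually.of_forall fun ω => ?_
    have htend : Tendsto (fun n => tau n (kap n t)) atTop (𝓝[Set.Ici t] t) := by
      rw [tendsto_nhdsWithin_iff]
      constructor
      · refine tendsto_of_tendsto_of_tendsto_of_le_of_le tendsto_const_nhds ?_
          (fun n => le_tau_kap n t) (fun n => tau_kap_le n t)
        have h0 : Tendsto (fun n : ℕ => t + del n) atTop (𝓝 (t + 0)) :=
          tendsto_const_nhds.add del_tendsto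
        simpa using h0
      · exact Eventually.of_forall fun n => le_tau_kap n t
    have hconv : Tendsto (fun n => Z (tau n (kap n t)) ω) atTop (𝓝 (Z t ω)) :=
      Filter.Tendsto.comp (hZ_rc ω t) htend
    have hWt : Tendsto (fun n => W n (L ω) ω t) atTop (𝓝 ((Z t ω : ℝ) : EReal)) := by
      have hWeq : (fun n => W n (L ω) ω t)
          = fun n => ((Z (tau n (kap n t)) ω : ℝ) : EReal) := by
        funext n; simp only [hW]; rw [← hg_eq n (kap n t) ω]
      rw [hWeq]
      exact (continuous_coe_real_ereal.tendsto _).comp hconv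
    simp only [hz]
    rw [hWt.limsup_eq, EReal.toReal_coe]
end

section
/- Let q be a density family for L, and let m : E × Ω × [0,∞) → ℝ be a jointly measurable function such that for every t ≥ 0 the map (x,ω) ↦ m^x_t(ω) is (B_E ⊗ F_t)-measurable, and for every x ∈ E the process (m^x_t q^x_t)_{t≥0} is a martingale on (Ω, F, P). If for every t ≥ 0 the random variable M_t := m^{L}_t is integrable, then the process M = (M_t)_{t≥0} is a martingale with respect to the filtration G⁰ (G⁰_t = F_t ⊔ σ(L)) on (Ω, P). -/
open MeasureTheory Set
open scoped ENNReal NNReal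

/-- The initially enlarged filtration `G⁰_t = F_t ⊔ σ(L)`. -/
noncomputable def initialEnlargement {Ω E : Type*} {mΩ : MeasurableSpace Ω}
    [MeasurableSpace E] (F : Filtration ℝ≥0 mΩ) (L : Ω → E) (hL : Measurable L) :
    Filtration ℝ≥0 mΩ where
  seq t := F t ⊔ MeasurableSpace.comap L inferInstance
  mono' s t hst := sup_le_sup_right (F.mono hst) _
  le' t := sup_le (F.le t) hL.comap_le

/-- If `(m^x q^x)` is an `F`-martingale for every `x` and `m^L_t` is
integrable for every `t`, then `M_t = m^L_t` is a martingale for the initially enlarged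
filtration `G⁰`. -/
theorem martingale_initialEnlargement_of_parametrized
    {Ω : Type*} {mΩ : MeasurableSpace Ω} {P : Measure Ω} [IsProbabilityMeasure P]
    {E : Type*} [MeasurableSpace E] [StandardBorelSpace E]
    (F : Filtration ℝ≥0 mΩ)
    (hF_rc : ∀ t : ℝ≥0, F t = ⨅ (ε : ℝ≥0) (_ : 0 < ε), F (t + ε))
    (L : Ω → E) (hL : Measurable L)
    (lam : Measure E) (hlam : P.map L = lam)
    (ν : ℝ≥0 → Ω → Measure E)
    (hν_prob : ∀ (t : ℝ≥0) (ω : Ω), IsProbabilityMeasure (ν t ω))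
    (hν_meas : ∀ (t : ℝ≥0) (B : Set E), MeasurableSet B →
      Measurable[F t] fun ω => ν t ω B)
    (hν_cond : ∀ (t : ℝ≥0) (B : Set E), MeasurableSet B →
      ∀ A : Set Ω, MeasurableSet[F t] A →
        ∫⁻ ω in A, ν t ω B ∂P = P (A ∩ L ⁻¹' B))
    (q : E → Ω → ℝ≥0 → ℝ)
    (hq_meas : Measurable fun p : E × Ω × ℝ≥0 => q p.1 p.2.1 p.2.2)
    (hq_nonneg : ∀ x ω t, 0 ≤ q x ω t)
    (hq_rc : ∀ (x : E) (ω : Ω) (t : ℝ≥0),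
      ContinuousWithinAt (fun s => q x ω s) (Set.Ici t) t)
    (hq_mart : ∀ x : E, Martingale (fun t ω => q x ω t) F P)
    (hq_dens : ∀ t : ℝ≥0, ∀ᵐ ω ∂P, ∀ B : Set E, MeasurableSet B →
      ν t ω B = ∫⁻ x in B, ENNReal.ofReal (q x ω t) ∂lam)
    (m : E → Ω → ℝ≥0 → ℝ)
    (hm_meas : Measurable fun p : E × Ω × ℝ≥0 => m p.1 p.2.1 p.2.2)
    (hm_meas_t : ∀ t : ℝ≥0, Measurable[(inferInstance : MeasurableSpace E).prod (F t)]
      fun p : E × Ω => m p.1 p.2 t)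
    (hm_mart : ∀ x : E, Martingale (fun t ω => m x ω t * q x ω t) F P)
    (hm_int : ∀ t : ℝ≥0, Integrable (fun ω => m (L ω) ω t) P) :
    Martingale (fun t ω => m (L ω) ω t) (initialEnlargement F L hL) P := by
  classical
  haveI hlam_prob : IsProbabilityMeasure lam := by
    rw [← hlam]; exact Measure.isProbabilityMeasure_map hL.aemeasurable
  have hmap : Measurable (fun ω : Ω => (L ω, ω)) := hL.prodMk measurable_id
  have hq_t : ∀ u : ℝ≥0, Measurable fun p : E × Ω => q p.1 p.2 u := fun u =>
    hq_meas.comp (measurable_fst.prodMk (measurable_snd.prodMk measurable_const))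
  have hle : ∀ u : ℝ≥0,
      (inferInstance : MeasurableSpace E).prod (F u) ≤
        (inferInstance : MeasurableSpace (E × Ω)) := fun u =>
    sup_le measurable_fst.comap_le
      ((MeasurableSpace.comap_mono (F.le u)).trans measurable_snd.comap_le)
  set κ : Measure (E × Ω) := P.map fun ω => (L ω, ω) with hκdef
  haveI : IsProbabilityMeasure κ := Measure.isProbabilityMeasure_map hmap.aemeasurable
  set μ : ℝ≥0 → Measure (E × Ω) :=
    (fun u => (lam.prod P).withDensity fun p => ENNReal.ofReal (q p.1 p.2 u)) with hμdef
  -- the two measures agree on rectangles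
  have h_basic : ∀ u : ℝ≥0, ∀ B : Set E, MeasurableSet B → ∀ A : Set Ω, MeasurableSet[F u] A →
      κ (B ×ˢ A) = μ u (B ×ˢ A) := by
    intro u B hB A hA
    have hA' : MeasurableSet A := F.le u A hA
    have h1 : κ (B ×ˢ A) = P (L ⁻¹' B ∩ A) := by
      rw [hκdef, Measure.map_apply hmap (hB.prod hA'), Set.mk_preimage_prod]
      rfl
    have h2 : μ u (B ×ˢ A) = P (A ∩ L ⁻¹' B) := by
      rw [hμdef]
      simp only
      rw [withDensity_apply _ (hB.prod hA'), ← Measure.prod_restrict,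
        lintegral_prod _ ((hq_t u).ennreal_ofReal.aemeasurable),
        lintegral_lintegral_swap ((hq_t u).ennreal_ofReal.aemeasurable),
        ← hν_cond u B hB A hA]
      refine lintegral_congr_ae (ae_restrict_of_ae ?_)
      filter_upwards [hq_dens u] with ω hω
      exact (hω B hB).symm
    rw [h1, h2, Set.inter_comm]
  have h_univ : ∀ u : ℝ≥0, κ Set.univ = μ u Set.univ := by
    intro u
    have := h_basic u Set.univ MeasurableSet.univ Set.univ MeasurableSet.univ
    rwa [Set.univ_prod_univ] at this
  -- the two measures agree on the sub-σ-algebra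
  have key : ∀ u : ℝ≥0, ∀ S : Set (E × Ω),
      MeasurableSet[(inferInstance : MeasurableSpace E).prod (F u)] S → κ S = μ u S := by
    intro u
    haveI hμfin : IsFiniteMeasure (μ u) := ⟨by
      rw [← h_univ u]; exact measure_lt_top κ _⟩
    intro S hS
    refine @MeasurableSpace.induction_on_inter (E × Ω)
      ((inferInstance : MeasurableSpace E).prod (F u)) (fun S _ => κ S = μ u S)
      (Set.image2 (· ×ˢ ·) {B : Set E | MeasurableSet B}
        {A : Set Ω | MeasurableSet[F u] A})
      (@generateFrom_prod E Ω _ (F u)).symm (@isPiSystem_prod E Ω _ (F u))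
      (by simp) ?_ ?_ ?_ S hS
    · rintro C ⟨B, hB, A, hA, rfl⟩
      exact h_basic u B hB A hA
    · intro C hCm hC
      rw [measure_compl (hle u C hCm) (measure_ne_top κ C),
        measure_compl (hle u C hCm) (measure_ne_top (μ u) C), hC, h_univ u]
    · intro f hdisj hfm hf
      rw [measure_iUnion hdisj fun k => hle u _ (hfm k),
        measure_iUnion hdisj fun k => hle u _ (hfm k)]
      exact tsum_congr hf
  have key_trim : ∀ u : ℝ≥0, κ.trim (hle u) = (μ u).trim (hle u) := fun u =>
    @Measure.ext (E × Ω) ((inferInstance : MeasurableSpace E).prod (F u)) _ _ fun S hS => by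
      rw [trim_measurableSet_eq (hle u) hS, trim_measurableSet_eq (hle u) hS, key u S hS]
  have int_eq : ∀ (u : ℝ≥0) (g : E × Ω → ℝ),
      StronglyMeasurable[(inferInstance : MeasurableSpace E).prod (F u)] g →
      ∫ p, g p ∂κ = ∫ p, g p ∂(μ u) := fun u g hg =>
    (integral_trim (hle u) hg).trans
      (by rw [key_trim u]; exact (integral_trim (hle u) hg).symm)
  have intg_eq : ∀ (u : ℝ≥0) (g : E × Ω → ℝ),
      StronglyMeasurable[(inferInstance : MeasurableSpace E).prod (F u)] g →
      Integrable g κ → Integrable g (μ u) := fun u g hg hgi =>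
    integrable_of_integrable_trim (hle u) (key_trim u ▸ hgi.trim (hle u) hg)
  -- main computation
  have main : ∀ u : ℝ≥0, ∀ B : Set E, MeasurableSet B → ∀ A : Set Ω, MeasurableSet[F u] A →
      ∫ ω in L ⁻¹' B ∩ A, m (L ω) ω u ∂P =
        ∫ x, B.indicator (fun x => ∫ ω in A, m x ω u * q x ω u ∂P) x ∂lam := by
    intro u B hB A hA
    have hA' : MeasurableSet A := F.le u A hA
    set g : E × Ω → ℝ := (B ×ˢ A).indicator (fun p => m p.1 p.2 u) with hgdef
    have hg_sm : StronglyMeasurable[(inferInstance : MeasurableSpace E).prod (F u)] g :=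
      ((hm_meas_t u).stronglyMeasurable).indicator (hB.prod hA)
    have hcomp : (fun ω => g (L ω, ω)) = (L ⁻¹' B ∩ A).indicator fun ω => m (L ω) ω u := by
      funext ω
      by_cases h1 : L ω ∈ B <;> by_cases h2 : ω ∈ A <;>
        simp [hgdef, Set.indicator_apply, h1, h2]
    have hint_comp : Integrable (fun ω => g (L ω, ω)) P := by
      rw [hcomp]; exact (hm_int u).indicator ((hL hB).inter hA')
    have hg_int : Integrable g κ := by
      rw [hκdef, integrable_map_measure (hg_sm.mono (hle u)).aestronglyMeasurable
        hmap.aemeasurable]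
      exact hint_comp
    have e1 : ∫ ω in L ⁻¹' B ∩ A, m (L ω) ω u ∂P = ∫ ω, g (L ω, ω) ∂P := by
      rw [hcomp, integral_indicator ((hL hB).inter hA')]
    have e2 : ∫ ω, g (L ω, ω) ∂P = ∫ p, g p ∂κ := by
      rw [hκdef, integral_map hmap.aemeasurable (hg_sm.mono (hle u)).aestronglyMeasurable]
    have e3 : ∫ p, g p ∂κ = ∫ p, g p ∂(μ u) := int_eq u g hg_sm
    have hq_nn : Measurable fun p : E × Ω => (q p.1 p.2 u).toNNReal := (hq_t u).real_toNNReal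
    have hμ_eq : μ u = (lam.prod P).withDensity fun p => ((q p.1 p.2 u).toNNReal : ℝ≥0∞) := rfl
    have e4 : ∫ p, g p ∂(μ u) = ∫ p, (q p.1 p.2 u).toNNReal • g p ∂(lam.prod P) := by
      rw [hμ_eq, integral_withDensity_eq_integral_smul hq_nn]
    have hint_prod : Integrable (fun p : E × Ω => (q p.1 p.2 u).toNNReal • g p)
        (lam.prod P) := by
      refine (integrable_withDensity_iff_integrable_smul hq_nn).1 ?_
      rw [← hμ_eq]
      exact intg_eq u g hg_sm hg_int
    have e5 : ∫ p : E × Ω, (q p.1 p.2 u).toNNReal • g p ∂(lam.prod P)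
        = ∫ x, ∫ ω, (q x ω u).toNNReal • g (x, ω) ∂P ∂lam := integral_prod _ hint_prod
    have e6 : ∀ x, ∫ ω, (q x ω u).toNNReal • g (x, ω) ∂P
        = B.indicator (fun x => ∫ ω in A, m x ω u * q x ω u ∂P) x := by
      intro x
      by_cases hx : x ∈ B
      · have hptwise : (fun ω => (q x ω u).toNNReal • g (x, ω))
            = A.indicator fun ω => m x ω u * q x ω u := by
          funext ω
          by_cases hω : ω ∈ A
          · simp only [hgdef, Set.indicator_of_mem hω,
              Set.indicator_of_mem (Set.mk_mem_prod hx hω), NNReal.smul_def,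
              Real.coe_toNNReal _ (hq_nonneg x ω u), smul_eq_mul]
            ring
          · simp [hgdef, Set.indicator_apply, hx, hω]
        rw [hptwise, integral_indicator hA', Set.indicator_of_mem hx]
      · have hptwise : (fun ω => (q x ω u).toNNReal • g (x, ω)) = fun _ => (0 : ℝ) := by
          funext ω; simp [hgdef, Set.indicator_apply, hx]
        rw [hptwise, integral_zero, Set.indicator_of_notMem hx]
    rw [e1, e2, e3, e4, e5]
    exact integral_congr_ae (Filter.Eventually.of_forall e6)
  -- adaptedness
  have hadapted : ∀ u : ℝ≥0,
      StronglyMeasurable[(initialEnlargement F L hL) u] fun ω => m (L ω) ω u := by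
    intro u
    have h1 : Measurable[F u ⊔ MeasurableSpace.comap L inferInstance] L :=
      Measurable.of_comap_le le_sup_right
    have h2 : @Measurable Ω Ω (F u ⊔ MeasurableSpace.comap L inferInstance) (F u) id :=
      measurable_id'' le_sup_left
    exact ((hm_meas_t u).comp (h1.prodMk h2)).stronglyMeasurable
  refine ⟨fun u => hadapted u, fun i j hij => ?_⟩
  -- martingale equality for set integrals on the generating π-system
  have hmart_eq : ∀ B : Set E, MeasurableSet B → ∀ A : Set Ω, MeasurableSet[F i] A →
      ∫ ω in L ⁻¹' B ∩ A, m (L ω) ω i ∂P = ∫ ω in L ⁻¹' B ∩ A, m (L ω) ω j ∂P := by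
    intro B hB A hA
    rw [main i B hB A hA, main j B hB A (F.mono hij A hA)]
    refine integral_congr_ae (Filter.Eventually.of_forall fun x => ?_)
    by_cases hx : x ∈ B
    · simp only [Set.indicator_of_mem hx]
      exact (hm_mart x).setIntegral_eq hij hA
    · simp [Set.indicator_of_notMem hx]
  have huniv_int : ∫ ω, m (L ω) ω i ∂P = ∫ ω, m (L ω) ω j ∂P := by
    have := hmart_eq Set.univ MeasurableSet.univ Set.univ MeasurableSet.univ
    simpa using this
  -- the generating π-system for the enlarged σ-algebra
  set R : Set (Set Ω) := {C : Set Ω | ∃ B : Set E, MeasurableSet B ∧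
    ∃ A : Set Ω, MeasurableSet[F i] A ∧ C = L ⁻¹' B ∩ A} with hRdef
  have h_gen : (F i ⊔ MeasurableSpace.comap L inferInstance) =
      MeasurableSpace.generateFrom R := by
    apply le_antisymm
    · refine sup_le ?_ ?_
      · intro A hA
        exact MeasurableSpace.measurableSet_generateFrom
          ⟨Set.univ, MeasurableSet.univ, A, hA, by simp⟩
      · rintro S ⟨B, hB, rfl⟩
        exact MeasurableSpace.measurableSet_generateFrom
          ⟨B, hB, Set.univ, MeasurableSet.univ, by simp⟩
    · refine MeasurableSpace.generateFrom_le ?_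
      rintro C ⟨B, hB, A, hA, rfl⟩
      exact MeasurableSet.inter (Measurable.of_comap_le le_sup_right hB)
        ((le_sup_left : F i ≤ F i ⊔ MeasurableSpace.comap L inferInstance) A hA)
  have h_pi : IsPiSystem R := by
    rintro C₁ ⟨B₁, hB₁, A₁, hA₁, rfl⟩ C₂ ⟨B₂, hB₂, A₂, hA₂, rfl⟩ _
    exact ⟨B₁ ∩ B₂, hB₁.inter hB₂, A₁ ∩ A₂, hA₁.inter hA₂, by
      ext ω; simp only [Set.mem_inter_iff, Set.mem_preimage]; tauto⟩
  have setint : ∀ S : Set Ω, MeasurableSet[F i ⊔ MeasurableSpace.comap L inferInstance] S →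
      ∫ ω in S, m (L ω) ω i ∂P = ∫ ω in S, m (L ω) ω j ∂P := by
    intro S hS
    have hlei : (F i ⊔ MeasurableSpace.comap L inferInstance) ≤ mΩ :=
      (initialEnlargement F L hL).le i
    refine @MeasurableSpace.induction_on_inter Ω
      (F i ⊔ MeasurableSpace.comap L inferInstance)
      (fun S _ => ∫ ω in S, m (L ω) ω i ∂P = ∫ ω in S, m (L ω) ω j ∂P) R
      h_gen h_pi (by simp) ?_ ?_ ?_ S hS
    · rintro C ⟨B, hB, A, hA, rfl⟩
      exact hmart_eq B hB A hA
    · intro C hCm hC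
      have hCm' : MeasurableSet C := hlei C hCm
      rw [setIntegral_compl hCm' (hm_int i), setIntegral_compl hCm' (hm_int j), hC, huniv_int]
    · intro f hdisj hfm hf
      have hfm' : ∀ k, MeasurableSet (f k) := fun k => hlei _ (hfm k)
      rw [integral_iUnion hfm' hdisj (hm_int i).integrableOn,
        integral_iUnion hfm' hdisj (hm_int j).integrableOn]
      exact tsum_congr hf
  -- conclude via uniqueness of conditional expectation
  haveI : SigmaFinite (P.trim ((initialEnlargement F L hL).le i)) := by
    infer_instance
  refine (ae_eq_condExp_of_forall_setIntegral_eq ((initialEnlargement F L hL).le i)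
    (hm_int j) (fun S _ _ => (hm_int i).integrableOn) (fun S hS _ => setint S hS)
    ((hadapted i).aestronglyMeasurable)).symm
end

section
/- Let m : E × Ω × [0,∞) → ℝ be a jointly measurable function such that for every t ≥ 0 the map (x,ω) ↦ m^x_t(ω) is (B_E ⊗ F_t)-measurable, for every x ∈ E the process (m^x_t)_{t≥0} is a martingale on (Ω, F, P), and ∫_E E[|m^x_t|] λ(dx) < ∞ for every t ≥ 0. Then the process μ = (μ_t)_{t≥0} on the product space, defined by μ_t(x,ω) := m^x_t(ω), is a martingale on (Ω̂, F̂, P̂). -/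
open MeasureTheory Set
open scoped ENNReal NNReal

/-- The product filtration `F̂_t = ⋂_{ε>0} (B_E ⊗ F_{t+ε})` on `Ω̂ = E × Ω`. -/
noncomputable def prodFiltration {Ω E : Type*} {mΩ : MeasurableSpace Ω}
    [mE : MeasurableSpace E] (F : Filtration ℝ≥0 mΩ) :
    Filtration ℝ≥0 (inferInstance : MeasurableSpace (E × Ω)) where
  seq t := ⨅ (ε : ℝ≥0) (_ : 0 < ε), mE.prod (F (t + ε))
  mono' s t hst := le_iInf₂ fun ε hε => (iInf₂_le ε hε).trans
    (sup_le_sup le_rfl (MeasurableSpace.comap_mono (F.mono (add_le_add hst le_rfl))))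
  le' t := (iInf₂_le 1 one_pos).trans
    (sup_le_sup le_rfl (MeasurableSpace.comap_mono (F.le _)))

/-- A parameterized family of `F`-martingales `(m^x)_{x ∈ E}` with
`(B_E ⊗ F_t)`-measurable sections and finite mixed first moments defines a martingale
`μ_t(x,ω) := m^x_t(ω)` on the product space `(Ω̂, F̂, P̂)`. -/
theorem prod_martingale_of_parametrized_martingales
    {Ω : Type*} {mΩ : MeasurableSpace Ω} {P : Measure Ω} [IsProbabilityMeasure P]
    {E : Type*} [mE : MeasurableSpace E] [StandardBorelSpace E]
    (F : Filtration ℝ≥0 mΩ)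
    (hF_rc : ∀ t : ℝ≥0, F t = ⨅ (ε : ℝ≥0) (_ : 0 < ε), F (t + ε))
    (lam : Measure E) [IsProbabilityMeasure lam]
    (m : E → Ω → ℝ≥0 → ℝ)
    (hm_meas : Measurable fun p : E × Ω × ℝ≥0 => m p.1 p.2.1 p.2.2)
    (hm_meas_t : ∀ t : ℝ≥0, Measurable[mE.prod (F t)] fun p : E × Ω => m p.1 p.2 t)
    (hm_mart : ∀ x : E, Martingale (fun t ω => m x ω t) F P)
    (hm_int : ∀ t : ℝ≥0, ∫⁻ x, ∫⁻ ω, ENNReal.ofReal |m x ω t| ∂P ∂lam < ⊤) :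
    Martingale (fun (t : ℝ≥0) (p : E × Ω) => m p.1 p.2 t) (prodFiltration F)
      (lam.prod P) := by

  -- basic measurability facts
  classical
  set f : ℝ≥0 → E × Ω → ℝ := fun t p => m p.1 p.2 t with hf_def
  have hprod_le : ∀ s t : ℝ≥0, s ≤ t → mE.prod (F s) ≤ mE.prod (F t) := fun s t hst =>
    sup_le_sup le_rfl (MeasurableSpace.comap_mono (F.mono hst))
  have hle_inst : ∀ t : ℝ≥0, mE.prod (F t) ≤ (inferInstance : MeasurableSpace (E × Ω)) :=
    fun t => sup_le_sup le_rfl (MeasurableSpace.comap_mono (F.le t))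
  have hle_hat : ∀ t : ℝ≥0, mE.prod (F t) ≤ prodFiltration F t := fun t =>
    le_iInf₂ fun ε hε => hprod_le _ _ le_self_add
  have hmeas0 : ∀ t, Measurable (f t) := fun t => (hm_meas_t t).mono (hle_inst t) le_rfl
  have hint : ∀ t, Integrable (f t) (lam.prod P) := by
    intro t
    refine ⟨(hmeas0 t).aestronglyMeasurable, ?_⟩
    show ∫⁻ p, ‖f t p‖ₑ ∂(lam.prod P) < ⊤
    rw [lintegral_prod _ ((hmeas0 t).enorm.aemeasurable)]
    simpa only [Real.enorm_eq_ofReal_abs] using hm_int t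
  -- sections of sets in the product filtration
  have hsection : ∀ (s : ℝ≥0) (A : Set (E × Ω)), MeasurableSet[prodFiltration F s] A →
      ∀ x : E, MeasurableSet[F s] (Prod.mk x ⁻¹' A) := by
    intro s A hA x
    have hAε : ∀ ε : ℝ≥0, 0 < ε → MeasurableSet[mE.prod (F (s + ε))] A := by
      intro ε hε
      have h1 := (MeasurableSpace.measurableSet_iInf).1 hA ε
      exact (MeasurableSpace.measurableSet_iInf).1 h1 hε
    have hsec : ∀ ε : ℝ≥0, 0 < ε → MeasurableSet[F (s + ε)] (Prod.mk x ⁻¹' A) := by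
      intro ε hε
      exact (@measurable_prodMk_left E Ω mE (F (s + ε)) x) (hAε ε hε)
    rw [hF_rc s]
    exact (MeasurableSpace.measurableSet_iInf).2 fun ε =>
      (MeasurableSpace.measurableSet_iInf).2 fun hε => hsec ε hε
  -- key set-integral identity
  have hkey : ∀ (s t : ℝ≥0), s ≤ t → ∀ A : Set (E × Ω),
      MeasurableSet[prodFiltration F s] A →
      ∫ p in A, f s p ∂(lam.prod P) = ∫ p in A, f t p ∂(lam.prod P) := by
    intro s t hst A hA
    have hA0 : MeasurableSet A := (prodFiltration F).le s A hA
    have hcalc : ∀ u : ℝ≥0, ∫ p in A, f u p ∂(lam.prod P)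
        = ∫ x, ∫ ω in Prod.mk x ⁻¹' A, m x ω u ∂P ∂lam := by
      intro u
      rw [← integral_indicator hA0, integral_prod _ ((hint u).indicator hA0)]
      refine integral_congr_ae (Filter.Eventually.of_forall fun x => ?_)
      show ∫ y, A.indicator (f u) (x, y) ∂P = ∫ ω in Prod.mk x ⁻¹' A, m x ω u ∂P
      rw [← integral_indicator (F.le s _ (hsection s A hA x))]
      refine integral_congr_ae (Filter.Eventually.of_forall fun ω => ?_)
      simp only [Set.indicator_apply, Set.mem_preimage, hf_def]
    rw [hcalc s, hcalc t]
    refine integral_congr_ae (Filter.Eventually.of_forall fun x => ?_)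
    exact (hm_mart x).setIntegral_eq hst (hsection s A hA x)
  -- conclude
  constructor
  · intro t
    exact ((hm_meas_t t).mono (hle_hat t) le_rfl).stronglyMeasurable
  · intro s t hst
    haveI : SigmaFinite ((lam.prod P).trim ((prodFiltration F).le s)) := by
      infer_instance
    refine (ae_eq_condExp_of_forall_setIntegral_eq ((prodFiltration F).le s) (hint t)
      (fun A hA _ => (hint s).integrableOn) (fun A hA _ => hkey s t hst A hA) ?_).symm
    exact StronglyMeasurable.aestronglyMeasurable
      (((hm_meas_t s).mono (hle_hat s) le_rfl).stronglyMeasurable)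
end
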